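/- Let U = ℤ, let L_∞ = ℤ and, for each i ∈ ℤ, let L_i = ℤ \ {i}, and let C = {L_∞} ∪ {L_i : i ∈ ℤ}. Let w : ℕ → ℤ be the fixed sequence 0, -1, 1, -2, 2, -3, 3, -4, 4, ... and consider the input-oblivious algorithm whose generator at time t is G_t(k) = w(t + k - 1) (so it outputs w(t) at step t, and in generate-only mode from time t it enumerates the tail of w starting at position t). This algorithm exhaustively generates in the limit from C. -/
import Mathlib


/-!
STATEMENT 6: Let U = ℤ, L_∞ = ℤ, and for i ∈ ℤ let L_i = ℤ \ {i};
C = {L_∞} ∪ {L_i : i ∈ ℤ}.  Let w be the fixed sequence 0, -1, 1, -2, 2, -3, 3, ...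
(0-indexed here: w 0 = 0, w 1 = -1, w 2 = 1, ...).  The input-oblivious algorithm
whose generator at time t outputs the tail of w starting at position t (so it outputs
w at position t at step t) exhaustively generates in the limit from C.

With 0-based encodings, the generator after an input prefix `l` of length `t` is
`fun k => w (t - 1 + k)`: its first output is `w (t-1)` (the t-th term of w) and its
range is the tail of `w` from position `t-1`, i.e. the tail starting at the t-th term.
-/

/-- `x` is an enumeration of the language `K`. -/
def IsEnumerationOf {U : Type} (K : Set U) (x : ℕ → U) : Prop :=
  (∀ t, x t ∈ K) ∧ ∀ w ∈ K, ∃ t, x t = w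

/-- The set `S_t` of distinct strings among the first `t` inputs. -/
def seen {U : Type} (x : ℕ → U) (t : ℕ) : Set U := x '' {i | i < t}

/-- The input prefix `(x_1, ..., x_t)` as a list. -/
def inputList {U : Type} (x : ℕ → U) (t : ℕ) : List U :=
  List.ofFn (fun i : Fin t => x i)

/-- `Z_{<t}`: the distinct strings among `G_1(1), ..., G_{t-1}(1)`. -/
def ZltSet {U : Type} (A : List U → ℕ → U) (x : ℕ → U) (t : ℕ) : Set U :=
  (fun s => A (inputList x s) 0) '' {s | 1 ≤ s ∧ s < t}

/-- `Z_{≥t}`: the distinct strings in `G_t(1), G_t(2), ...`. -/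
def ZgeSet {U : Type} (A : List U → ℕ → U) (x : ℕ → U) (t : ℕ) : Set U :=
  Set.range (A (inputList x t))

/-- The algorithm `A` exhaustively generates in the limit from the collection `C`. -/
def ExhaustivelyGenerates {U : Type} (A : List U → ℕ → U) (C : Set (Set U)) : Prop :=
  ∀ K ∈ C, ∀ x : ℕ → U, IsEnumerationOf K x →
    ∃ tstar : ℕ, ∀ t : ℕ, tstar ≤ t →
      (ZgeSet A x t \ K).Finite ∧ K ⊆ seen x t ∪ ZltSet A x t ∪ ZgeSet A x t

/-- The sequence 0, -1, 1, -2, 2, -3, 3, -4, 4, ... (0-indexed). -/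
def zigzag (n : ℕ) : ℤ := if n % 2 = 1 then -(((n : ℤ) + 1) / 2) else (n : ℤ) / 2

/-- The collection C = {ℤ} ∪ {ℤ \ {i} : i ∈ ℤ}. -/
def Ccomp : Set (Set ℤ) :=
  insert (Set.univ : Set ℤ) (Set.range fun i : ℤ => ({i}ᶜ : Set ℤ))

lemma zigzag_surj : Function.Surjective zigzag := by
  intro y
  rcases le_or_gt 0 y with h | h
  · refine ⟨2 * y.toNat, ?_⟩
    unfold zigzag
    split <;> omega
  · refine ⟨2 * (-y).toNat - 1, ?_⟩
    unfold zigzag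
    split <;> omega

theorem zigzag_exhaustively_generates :
    ExhaustivelyGenerates
      (fun (l : List ℤ) (k : ℕ) => zigzag (l.length - 1 + k)) Ccomp := by
  intro K hK x _
  refine ⟨0, fun t _ => ⟨?_, ?_⟩⟩
  · have hfin : (Kᶜ : Set ℤ).Finite := by
      simp only [Ccomp, Set.mem_insert_iff, Set.mem_range] at hK
      rcases hK with rfl | ⟨i, rfl⟩
      · simp
      · simp
    exact hfin.subset fun z hz => hz.2
  · intro y _
    obtain ⟨n, rfl⟩ := zigzag_surj y
    rw [Set.mem_union, Set.mem_union]
    by_cases hn : n + 1 < t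
    · left; right
      refine ⟨n + 1, ⟨Nat.le_add_left 1 n, hn⟩, ?_⟩
      simp [inputList]
    · right
      refine ⟨n - (t - 1), ?_⟩
      simp only [inputList, List.length_ofFn]
      congr 1
      omega
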